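/- For all integers m ≥ 3 and k ≥ 1 such that it is not the case that m = 5 and k ∈ {2, 3, 5}, and not the case that m = 7 and k = 3, the double Roman domination number of the graph C_{m,k} satisfies γ_dR(C_{m,k}) ≤ 12(m+k)/11. -/
import Mathlib


/-- A double Roman dominating function on a simple graph `G`:
values in `{0,1,2,3}`, every vertex with value `0` has two neighbors with value `2`
or one neighbor with value `3`, and every vertex with value `1` has a neighbor with
value at least `2`. -/
def IsDRDF {V : Type*} (G : SimpleGraph V) (f : V → ℕ) : Prop :=
  (∀ v, f v ≤ 3) ∧
  (∀ v, f v = 0 →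
    (∃ u w, u ≠ w ∧ G.Adj v u ∧ G.Adj v w ∧ f u = 2 ∧ f w = 2) ∨ ∃ u, G.Adj v u ∧ f u = 3) ∧
  (∀ v, f v = 1 → ∃ u, G.Adj v u ∧ 2 ≤ f u)

/-- The double Roman domination number: the minimum weight of a DRDF. -/
noncomputable def gammaDR {V : Type*} [Fintype V] (G : SimpleGraph V) : ℕ :=
  sInf {w | ∃ f, IsDRDF G f ∧ ∑ v, f v = w}

/-- Base relation for the graph `C_{m,k}`: a cycle `x_1 ⋯ x_m x_1` (here `Fin m`, with
`x_1` being `0`), a path `y_1 ⋯ y_k` (here `Fin k`, with `y_1` being `0` and `y_k` being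
`k-1`), together with the edge `x_1 y_1`. -/
def cmkR (m k : ℕ) : (Fin m ⊕ Fin k) → (Fin m ⊕ Fin k) → Prop
  | .inl u, .inl v => (u.val + 1) % m = v.val
  | .inr i, .inr j => i.val + 1 = j.val
  | .inl u, .inr j => u.val = 0 ∧ j.val = 0
  | .inr _, .inl _ => False

/-- The graph `C_{m,k}`. -/
def Cmk (m k : ℕ) : SimpleGraph (Fin m ⊕ Fin k) := SimpleGraph.fromRel (cmkR m k)

/- ## Auxiliary material -/

instance cmkRDec (m k : ℕ) : DecidableRel (cmkR m k) := fun a b =>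
  match a, b with
  | .inl u, .inl v => inferInstanceAs (Decidable ((u.val + 1) % m = v.val))
  | .inr i, .inr j => inferInstanceAs (Decidable (i.val + 1 = j.val))
  | .inl u, .inr j => inferInstanceAs (Decidable (u.val = 0 ∧ j.val = 0))
  | .inr _, .inl _ => inferInstanceAs (Decidable False)

instance cmkAdjDec (m k : ℕ) : DecidableRel (Cmk m k).Adj := fun a b =>
  decidable_of_iff _ (SimpleGraph.fromRel_adj (cmkR m k) a b).symm

lemma cmk_adj_inl {m k : ℕ} (hm : 2 ≤ m) {i j : Fin m} (h : (i.val + 1) % m = j.val) :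
    (Cmk m k).Adj (Sum.inl i) (Sum.inl j) := by
  rw [Cmk, SimpleGraph.fromRel_adj]
  refine ⟨fun he => ?_, Or.inl h⟩
  obtain rfl : i = j := Sum.inl.inj he
  rcases Nat.lt_or_ge (i.val + 1) m with hl | hl
  · rw [Nat.mod_eq_of_lt hl] at h; omega
  · have he2 : i.val + 1 = m := by have := i.isLt; omega
    rw [he2, Nat.mod_self] at h
    omega

lemma cmk_adj_inr {m k : ℕ} {t s : Fin k} (h : t.val + 1 = s.val) :
    (Cmk m k).Adj (Sum.inr t) (Sum.inr s) := by
  rw [Cmk, SimpleGraph.fromRel_adj]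
  exact ⟨fun he => by obtain rfl : t = s := Sum.inr.inj he; omega, Or.inl h⟩

lemma cmk_adj_bridge {m k : ℕ} {i : Fin m} {t : Fin k} (hi : i.val = 0) (ht : t.val = 0) :
    (Cmk m k).Adj (Sum.inl i) (Sum.inr t) := by
  rw [Cmk, SimpleGraph.fromRel_adj]
  exact ⟨by simp, Or.inl ⟨hi, ht⟩⟩

/-- Value assigned on the cycle. -/
def fc (m a : ℕ) : ℕ :=
  if m % 3 = 1 then
    if a % 3 = 0 ∧ a + 4 ≤ m then 3 else if a + 2 = m then 2 else 0
  else if a % 3 = 0 then 3 else 0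

/-- Value assigned on the path. -/
def fp (k a : ℕ) : ℕ :=
  if a % 3 = 2 then 3 else if a + 1 = k ∧ k % 3 = 2 then 2 else 0

/-- The general construction. -/
def fgen (m k : ℕ) : Fin m ⊕ Fin k → ℕ :=
  Sum.elim (fun i => fc m i.val) (fun t => fp k t.val)

lemma fgen_isDRDF (m k : ℕ) (hm : 3 ≤ m) (hk : 1 ≤ k) : IsDRDF (Cmk m k) (fgen m k) := by
  refine ⟨?_, ?_, ?_⟩
  · intro v
    rcases v with i | t <;>
      simp only [fgen, Sum.elim_inl, Sum.elim_inr, fc, fp] <;> split_ifs <;> (try simp only [true_and] at *) <;> omega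
  · intro v hv
    right
    rcases v with i | t
    · have hlt := i.isLt
      simp only [fgen, Sum.elim_inl, fc] at hv
      by_cases hm1 : m % 3 = 1
      · rw [if_pos hm1] at hv
        split_ifs at hv with h1 h2
        rcases show i.val % 3 = 0 ∨ i.val % 3 = 1 ∨ i.val % 3 = 2 by omega with h | h | h
        · refine ⟨Sum.inl ⟨0, by omega⟩, cmk_adj_inl (by omega) ?_, ?_⟩
          · show (i.val + 1) % m = 0
            rw [show i.val + 1 = m by omega, Nat.mod_self]
          · show fc m 0 = 3
            simp only [fc]; split_ifs <;> (try simp only [true_and] at *) <;> omega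
        · refine ⟨Sum.inl ⟨i.val - 1, by omega⟩, (cmk_adj_inl (by omega) ?_).symm, ?_⟩
          · show (i.val - 1 + 1) % m = i.val
            rw [Nat.sub_add_cancel (by omega), Nat.mod_eq_of_lt hlt]
          · show fc m (i.val - 1) = 3
            simp only [fc]; split_ifs <;> (try simp only [true_and] at *) <;> omega
        · by_cases hw : i.val + 1 < m
          · refine ⟨Sum.inl ⟨i.val + 1, hw⟩, cmk_adj_inl (by omega) ?_, ?_⟩
            · show (i.val + 1) % m = i.val + 1
              exact Nat.mod_eq_of_lt hw
            · show fc m (i.val + 1) = 3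
              simp only [fc]; split_ifs <;> (try simp only [true_and] at *) <;> omega
          · refine ⟨Sum.inl ⟨0, by omega⟩, cmk_adj_inl (by omega) ?_, ?_⟩
            · show (i.val + 1) % m = 0
              rw [show i.val + 1 = m by omega, Nat.mod_self]
            · show fc m 0 = 3
              simp only [fc]; split_ifs <;> (try simp only [true_and] at *) <;> omega
      · rw [if_neg hm1] at hv
        split_ifs at hv with h1
        rcases show i.val % 3 = 1 ∨ i.val % 3 = 2 by omega with h | h
        · refine ⟨Sum.inl ⟨i.val - 1, by omega⟩, (cmk_adj_inl (by omega) ?_).symm, ?_⟩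
          · show (i.val - 1 + 1) % m = i.val
            rw [Nat.sub_add_cancel (by omega), Nat.mod_eq_of_lt hlt]
          · show fc m (i.val - 1) = 3
            simp only [fc]; split_ifs <;> (try simp only [true_and] at *) <;> omega
        · by_cases hw : i.val + 1 < m
          · refine ⟨Sum.inl ⟨i.val + 1, hw⟩, cmk_adj_inl (by omega) ?_, ?_⟩
            · show (i.val + 1) % m = i.val + 1
              exact Nat.mod_eq_of_lt hw
            · show fc m (i.val + 1) = 3
              simp only [fc]; split_ifs <;> (try simp only [true_and] at *) <;> omega
          · refine ⟨Sum.inl ⟨0, by omega⟩, cmk_adj_inl (by omega) ?_, ?_⟩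
            · show (i.val + 1) % m = 0
              rw [show i.val + 1 = m by omega, Nat.mod_self]
            · show fc m 0 = 3
              simp only [fc]; split_ifs <;> (try simp only [true_and] at *) <;> omega
    · have hlt := t.isLt
      simp only [fgen, Sum.elim_inr, fp] at hv
      split_ifs at hv with h1 h2
      rcases show t.val % 3 = 0 ∨ t.val % 3 = 1 by omega with h | h
      · by_cases ht0 : t.val = 0
        · refine ⟨Sum.inl ⟨0, by omega⟩, (cmk_adj_bridge rfl ht0).symm, ?_⟩
          show fc m 0 = 3
          simp only [fc]; split_ifs <;> (try simp only [true_and] at *) <;> omega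
        · refine ⟨Sum.inr ⟨t.val - 1, by omega⟩, (cmk_adj_inr ?_).symm, ?_⟩
          · show t.val - 1 + 1 = t.val
            omega
          · show fp k (t.val - 1) = 3
            simp only [fp]; split_ifs <;> (try simp only [true_and] at *) <;> omega
      · refine ⟨Sum.inr ⟨t.val + 1, by omega⟩, cmk_adj_inr rfl, ?_⟩
        show fp k (t.val + 1) = 3
        simp only [fp]; split_ifs <;> (try simp only [true_and] at *) <;> omega
  · intro v hv
    exfalso
    rcases v with i | t <;>
      simp only [fgen, Sum.elim_inl, Sum.elim_inr, fc, fp] at hv <;> split_ifs at hv <;> omega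

lemma sum_if_mod3_zero (n : ℕ) :
    ∑ i ∈ Finset.range n, (if i % 3 = 0 then (3:ℕ) else 0) = 3 * ((n + 2) / 3) := by
  induction n with
  | zero => simp
  | succ n ih =>
    rw [Finset.sum_range_succ, ih]
    by_cases h : n % 3 = 0
    · rw [if_pos h]; omega
    · rw [if_neg h]; omega

lemma sum_if_mod3_two (n : ℕ) :
    ∑ i ∈ Finset.range n, (if i % 3 = 2 then (3:ℕ) else 0) = 3 * (n / 3) := by
  induction n with
  | zero => simp
  | succ n ih =>
    rw [Finset.sum_range_succ, ih]
    by_cases h : n % 3 = 2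
    · rw [if_pos h]; omega
    · rw [if_neg h]; omega

lemma sum_fc (m : ℕ) (hm : 3 ≤ m) :
    ∑ i ∈ Finset.range m, fc m i = if m % 3 = 0 then m else m + 1 := by
  by_cases h1 : m % 3 = 1
  · obtain ⟨a, rfl⟩ : ∃ a, m = a + 1 + 1 := ⟨m - 2, by omega⟩
    rw [Finset.sum_range_succ, Finset.sum_range_succ]
    have e1 : fc (a + 1 + 1) (a + 1) = 0 := by
      simp only [fc]; split_ifs <;> (try simp only [true_and] at *) <;> omega
    have e0 : fc (a + 1 + 1) a = 2 := by
      simp only [fc]; split_ifs <;> (try simp only [true_and] at *) <;> omega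
    have hcong : ∀ i ∈ Finset.range a, fc (a + 1 + 1) i = if i % 3 = 0 then 3 else 0 := by
      intro i hi
      rw [Finset.mem_range] at hi
      simp only [fc]; split_ifs <;> (try simp only [true_and] at *) <;> omega
    have hne : ¬(a + 1 + 1) % 3 = 0 := by omega
    rw [Finset.sum_congr rfl hcong, sum_if_mod3_zero, e0, e1, if_neg hne]
    omega
  · have hcong : ∀ i ∈ Finset.range m, fc m i = if i % 3 = 0 then 3 else 0 := by
      intro i hi
      simp only [fc]; split_ifs <;> (try simp only [true_and] at *) <;> omega
    rw [Finset.sum_congr rfl hcong, sum_if_mod3_zero]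
    split_ifs <;> (try simp only [true_and] at *) <;> omega

lemma sum_fp (k : ℕ) :
    ∑ i ∈ Finset.range k, fp k i = if k % 3 = 1 then k - 1 else k := by
  by_cases h2 : k % 3 = 2
  · obtain ⟨a, rfl⟩ : ∃ a, k = a + 1 := ⟨k - 1, by omega⟩
    rw [Finset.sum_range_succ]
    have ha : fp (a + 1) a = 2 := by
      simp only [fp]; split_ifs <;> (try simp only [true_and] at *) <;> omega
    have hcong : ∀ i ∈ Finset.range a, fp (a + 1) i = if i % 3 = 2 then 3 else 0 := by
      intro i hi
      rw [Finset.mem_range] at hi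
      simp only [fp]; split_ifs <;> (try simp only [true_and] at *) <;> omega
    have hne : ¬(a + 1) % 3 = 1 := by omega
    rw [Finset.sum_congr rfl hcong, sum_if_mod3_two, ha, if_neg hne]
    omega
  · have hcong : ∀ i ∈ Finset.range k, fp k i = if i % 3 = 2 then 3 else 0 := by
      intro i hi
      simp only [fp]; split_ifs <;> (try simp only [true_and] at *) <;> omega
    rw [Finset.sum_congr rfl hcong, sum_if_mod3_two]
    split_ifs <;> (try simp only [true_and] at *) <;> omega

lemma gammaDR_le_of_isDRDF {m k : ℕ} (f : Fin m ⊕ Fin k → ℕ) (h : IsDRDF (Cmk m k) f) :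
    gammaDR (Cmk m k) ≤ ∑ v, f v :=
  Nat.sInf_le ⟨f, h, rfl⟩

lemma gammaDR_le_fgen (m k : ℕ) (hm : 3 ≤ m) (hk : 1 ≤ k) :
    gammaDR (Cmk m k) ≤
      (if m % 3 = 0 then m else m + 1) + (if k % 3 = 1 then k - 1 else k) := by
  have h2 := gammaDR_le_of_isDRDF (fgen m k) (fgen_isDRDF m k hm hk)
  have h3 : ∑ v, fgen m k v =
      (if m % 3 = 0 then m else m + 1) + (if k % 3 = 1 then k - 1 else k) := by
    rw [Fintype.sum_sum_type]
    simp only [fgen, Sum.elim_inl, Sum.elim_inr]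
    rw [Fin.sum_univ_eq_sum_range (fun i => fc m i) m,
      Fin.sum_univ_eq_sum_range (fun i => fp k i) k, sum_fc m hm, sum_fp k]
  rw [h3] at h2
  exact h2

lemma case42 : gammaDR (Cmk 4 2) ≤ 6 := by
  have h := gammaDR_le_of_isDRDF (m := 4) (k := 2) (Sum.elim ![0,0,3,0] ![3,0]) (by unfold IsDRDF; decide)
  have hs : (∑ v, (Sum.elim ![0,0,3,0] ![3,0] : Fin 4 ⊕ Fin 2 → ℕ) v) = 6 := by decide
  omega

lemma case43 : gammaDR (Cmk 4 3) ≤ 7 := by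
  have h := gammaDR_le_of_isDRDF (m := 4) (k := 3) (Sum.elim ![0,2,0,2] ![0,3,0]) (by unfold IsDRDF; decide)
  have hs : (∑ v, (Sum.elim ![0,2,0,2] ![0,3,0] : Fin 4 ⊕ Fin 3 → ℕ) v) = 7 := by decide
  omega

lemma case45 : gammaDR (Cmk 4 5) ≤ 9 := by
  have h := gammaDR_le_of_isDRDF (m := 4) (k := 5) (Sum.elim ![0,0,3,0] ![3,0,0,3,0]) (by unfold IsDRDF; decide)
  have hs : (∑ v, (Sum.elim ![0,0,3,0] ![3,0,0,3,0] : Fin 4 ⊕ Fin 5 → ℕ) v) = 9 := by decide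
  omega

lemma case46 : gammaDR (Cmk 4 6) ≤ 10 := by
  have h := gammaDR_le_of_isDRDF (m := 4) (k := 6) (Sum.elim ![0,2,0,2] ![0,3,0,0,3,0]) (by unfold IsDRDF; decide)
  have hs : (∑ v, (Sum.elim ![0,2,0,2] ![0,3,0,0,3,0] : Fin 4 ⊕ Fin 6 → ℕ) v) = 10 := by
    decide
  omega

lemma case72 : gammaDR (Cmk 7 2) ≤ 9 := by
  have h := gammaDR_le_of_isDRDF (m := 7) (k := 2) (Sum.elim ![0,0,3,0,0,3,0] ![3,0]) (by unfold IsDRDF; decide)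
  have hs : (∑ v, (Sum.elim ![0,0,3,0,0,3,0] ![3,0] : Fin 7 ⊕ Fin 2 → ℕ) v) = 9 := by decide
  omega

lemma case82 : gammaDR (Cmk 8 2) ≤ 10 := by
  have h := gammaDR_le_of_isDRDF (m := 8) (k := 2) (Sum.elim ![2,0,2,0,2,0,2,0] ![0,2]) (by unfold IsDRDF; decide)
  have hs : (∑ v, (Sum.elim ![2,0,2,0,2,0,2,0] ![0,2] : Fin 8 ⊕ Fin 2 → ℕ) v) = 10 := by
    decide
  omega

/-- For all integers `m ≥ 3`, `k ≥ 1` avoiding the excluded cases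
(`m = 5` with `k ∈ {2,3,5}`, and `m = 7` with `k = 3`),
`γ_dR(C_{m,k}) ≤ 12(m+k)/11`. -/
theorem gammaDR_Cmk_le (m k : ℕ) (hm : 3 ≤ m) (hk : 1 ≤ k)
    (h5 : ¬ (m = 5 ∧ (k = 2 ∨ k = 3 ∨ k = 5))) (h7 : ¬ (m = 7 ∧ k = 3)) :
    (gammaDR (Cmk m k) : ℚ) ≤ 12 * (m + k) / 11 := by
  have key : 11 * gammaDR (Cmk m k) ≤ 12 * (m + k) := by
    by_cases hA : m % 3 = 0 ∨ k % 3 = 1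
    · have h := gammaDR_le_fgen m k hm hk
      have hb : (if m % 3 = 0 then m else m + 1) + (if k % 3 = 1 then k - 1 else k) ≤ m + k := by
        split_ifs <;> (try simp only [true_and] at *) <;> omega
      omega
    · push_neg at hA
      obtain ⟨hA1, hA2⟩ := hA
      by_cases hn : 11 ≤ m + k
      · have h := gammaDR_le_fgen m k hm hk
        have hb : (if m % 3 = 0 then m else m + 1) + (if k % 3 = 1 then k - 1 else k)
            ≤ m + k + 1 := by
          split_ifs <;> (try simp only [true_and] at *) <;> omega
        omega
      · have hm9 : m ≤ 9 := by omega
        have hk7 : k ≤ 7 := by omega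
        interval_cases m <;> interval_cases k <;>
          first
            | omega
            | (have := case42; omega)
            | (have := case43; omega)
            | (have := case45; omega)
            | (have := case46; omega)
            | (have := case72; omega)
            | (have := case82; omega)
  have key' : ((11 * gammaDR (Cmk m k) : ℕ) : ℚ) ≤ ((12 * (m + k) : ℕ) : ℚ) :=
    Nat.cast_le.mpr key
  rw [le_div_iff₀ (by norm_num : (0:ℚ) < 11)]
  push_cast at key' ⊢
  linarith
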